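/- Every finite simple graph G of order n, girth at least 5, and minimum degree at least 2 has location-domination number γLD(G) ≤ n/2. -/

import Mathlib

/-- A set of vertices is *dominating* if every vertex is equal or adjacent to a
member of the set. -/
def SimpleGraph.DominatingSet {V : Type*} (G : SimpleGraph V) (D : Set V) : Prop :=
  ∀ v : V, ∃ d ∈ D, d = v ∨ G.Adj d v

/-- A set `C` is *locating-dominating* if it is dominating and every two distinct
vertices outside `C` have different neighbourhoods within `C`. -/
def SimpleGraph.LocatingDominatingSet {V : Type*} (G : SimpleGraph V) (C : Set V) : Prop :=
  G.DominatingSet C ∧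
    ∀ u ∉ C, ∀ v ∉ C, u ≠ v → G.neighborSet u ∩ C ≠ G.neighborSet v ∩ C

/-- The location-domination number: the minimum size of a locating-dominating set. -/
noncomputable def SimpleGraph.gammaLD {V : Type*} (G : SimpleGraph V) : ℕ :=
  sInf {k : ℕ | ∃ C : Set V, G.LocatingDominatingSet C ∧ C.ncard = k}

open SimpleGraph

section aux

variable {V : Type*} {G : SimpleGraph V}

private lemma ld_no_c3 (hg : 5 ≤ G.egirth) {a b c : V}
    (h1 : G.Adj a b) (h2 : G.Adj b c) (h3 : G.Adj c a) : False := by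
  have hc : (Walk.cons h1 (Walk.cons h2 (Walk.cons h3 (Walk.nil)))).IsCycle := by
    simp [Walk.isCycle_def, Walk.isTrail_def, h1.ne, h2.ne, h3.ne, h1.ne', h2.ne', h3.ne',
      Sym2.eq, Sym2.rel_iff']
  have := SimpleGraph.le_egirth.mp hg a _ hc
  rw [show (Walk.cons h1 (Walk.cons h2 (Walk.cons h3 (Walk.nil)))).length = 3 by simp] at this
  exact absurd this (by norm_num)

private lemma ld_no_c4 (hg : 5 ≤ G.egirth) {u a v b : V} (huv : u ≠ v) (hab : a ≠ b)
    (h1 : G.Adj u a) (h2 : G.Adj a v) (h3 : G.Adj v b) (h4 : G.Adj b u) : False := by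
  have hc : (Walk.cons h1 (Walk.cons h2 (Walk.cons h3 (Walk.cons h4 Walk.nil)))).IsCycle := by
    simp [Walk.isCycle_def, Walk.isTrail_def, h1.ne, h2.ne, h3.ne, h4.ne,
      h1.ne', h2.ne', h3.ne', h4.ne', huv, hab, huv.symm, hab.symm, Sym2.eq, Sym2.rel_iff']
  have := SimpleGraph.le_egirth.mp hg u _ hc
  rw [show (Walk.cons h1 (Walk.cons h2 (Walk.cons h3 (Walk.cons h4 Walk.nil)))).length = 4
    by simp] at this
  exact absurd this (by norm_num)

end aux

theorem ld_exists_small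
    {V : Type*} [Fintype V] (G : SimpleGraph V) (hg : 5 ≤ G.egirth)
    (hdeg : ∀ v : V, 2 ≤ (G.neighborSet v).ncard) :
    ∃ C : Set V, G.LocatingDominatingSet C ∧ 2 * C.ncard ≤ Fintype.card V := by
  classical
  set S : Set (V → Option V) :=
    {f | ∀ ⦃v w : V⦄, f v = some w → f w = some v ∧ G.Adj v w} with hSdef
  have hSne : S.Nonempty := ⟨fun _ => none, by intro v w h; simp at h⟩
  obtain ⟨f, hfS, hfmax⟩ :=
    Set.Finite.exists_maximalFor (fun g => {v | (g v).isSome}.ncard) S (Set.toFinite S) hSne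
  have hpair : ∀ ⦃v w : V⦄, f v = some w → f w = some v ∧ G.Adj v w := hfS
  -- maximality: no pairing strictly extends f's matched set
  have hgrow : ∀ g ∈ S, ¬ ({v | (f v).isSome} ⊂ {v | (g v).isSome}) := by
    intro g hg hsub
    have hlt := Set.ncard_lt_ncard hsub (Set.toFinite _)
    have := hfmax hg (le_of_lt hlt)
    dsimp only at this
    omega
  -- P1 : neighbors of unmatched vertices are matched
  have hP1 : ∀ ⦃u w : V⦄, f u = none → G.Adj u w → (f w).isSome := by
    intro u w hu hadj
    by_contra hw
    rw [Option.not_isSome_iff_eq_none] at hw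
    have hne : u ≠ w := hadj.ne
    set g : V → Option V := Function.update (Function.update f u (some w)) w (some u) with hgdef
    have hgu : g u = some w := by
      simp [hgdef, Function.update_of_ne hne, Function.update_self]
    have hgw : g w = some u := by simp [hgdef]
    have hgother : ∀ z, z ≠ u → z ≠ w → g z = f z := by
      intro z hzu hzw
      simp [hgdef, Function.update_of_ne hzu, Function.update_of_ne hzw]
    have hgS : g ∈ S := by
      intro v z hvz
      by_cases hvw : v = w
      · subst hvw
        rw [hgw] at hvz
        obtain rfl : u = z := by simpa using hvz
        exact ⟨hgu, hadj.symm⟩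
      · by_cases hvu : v = u
        · subst hvu
          rw [hgu] at hvz
          obtain rfl : w = z := by simpa using hvz
          exact ⟨hgw, hadj⟩
        · rw [hgother v hvu hvw] at hvz
          obtain ⟨h1, h2⟩ := hpair hvz
          have hzu : z ≠ u := by rintro rfl; rw [hu] at h1; simp at h1
          have hzw : z ≠ w := by rintro rfl; rw [hw] at h1; simp at h1
          exact ⟨by rw [hgother z hzu hzw]; exact h1, h2⟩
    refine hgrow g hgS ⟨?_, ?_⟩
    · intro v hv
      simp only [Set.mem_setOf_eq] at hv ⊢
      have hvu : v ≠ u := by rintro rfl; rw [hu] at hv; simp at hv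
      have hvw : v ≠ w := by rintro rfl; rw [hw] at hv; simp at hv
      rw [hgother v hvu hvw]; exact hv
    · intro hsub
      have := hsub (show u ∈ {v | (g v).isSome} by simp [hgu])
      simp only [Set.mem_setOf_eq, hu] at this
      simp at this
  -- P2 : no augmenting path of length 3
  have hP2 : ∀ ⦃x y u u' : V⦄, f x = some y → f u = none → f u' = none → u ≠ u' →
      G.Adj x u → G.Adj y u' → False := by
    intro x y u u' hxy hu hu' huu' hxu hyu'
    obtain ⟨hyx, hxyadj⟩ := hpair hxy
    have hxy' : x ≠ y := hxyadj.ne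
    have hux : u ≠ x := hxu.ne'
    have huy : u ≠ y := by rintro rfl; rw [hu] at hyx; simp at hyx
    have hu'y : u' ≠ y := hyu'.ne'
    have hu'x : u' ≠ x := by rintro rfl; rw [hu'] at hxy; simp at hxy
    set g : V → Option V :=
      Function.update (Function.update (Function.update (Function.update f
        x (some u)) u (some x)) y (some u')) u' (some y) with hgdef
    have hgx : g x = some u := by
      simp [hgdef, Function.update_of_ne hu'x.symm, Function.update_of_ne hxy',
        Function.update_of_ne hux.symm]
    have hgu : g u = some x := by
      simp [hgdef, Function.update_of_ne huu', Function.update_of_ne huy]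
    have hgy : g y = some u' := by
      simp [hgdef, Function.update_of_ne hu'y.symm]
    have hgu' : g u' = some y := by simp [hgdef]
    have hgother : ∀ z, z ≠ x → z ≠ u → z ≠ y → z ≠ u' → g z = f z := by
      intro z h1 h2 h3 h4
      simp [hgdef, Function.update_of_ne h1, Function.update_of_ne h2,
        Function.update_of_ne h3, Function.update_of_ne h4]
    have hgS : g ∈ S := by
      intro v z hvz
      by_cases h1 : v = x
      · subst h1; rw [hgx] at hvz
        obtain rfl : u = z := by simpa using hvz
        exact ⟨hgu, hxu⟩
      · by_cases h2 : v = u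
        · subst h2; rw [hgu] at hvz
          obtain rfl : x = z := by simpa using hvz
          exact ⟨hgx, hxu.symm⟩
        · by_cases h3 : v = y
          · subst h3; rw [hgy] at hvz
            obtain rfl : u' = z := by simpa using hvz
            exact ⟨hgu', hyu'⟩
          · by_cases h4 : v = u'
            · subst h4; rw [hgu'] at hvz
              obtain rfl : y = z := by simpa using hvz
              exact ⟨hgy, hyu'.symm⟩
            · rw [hgother v h1 h2 h3 h4] at hvz
              obtain ⟨hzv, hadj⟩ := hpair hvz
              have hz1 : z ≠ x := by
                rintro rfl; rw [hxy] at hzv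
                obtain rfl : y = v := by simpa using hzv
                exact h3 rfl
              have hz2 : z ≠ u := by rintro rfl; rw [hu] at hzv; simp at hzv
              have hz3 : z ≠ y := by
                rintro rfl; rw [hyx] at hzv
                obtain rfl : x = v := by simpa using hzv
                exact h1 rfl
              have hz4 : z ≠ u' := by rintro rfl; rw [hu'] at hzv; simp at hzv
              exact ⟨by rw [hgother z hz1 hz2 hz3 hz4]; exact hzv, hadj⟩
    refine hgrow g hgS ⟨?_, ?_⟩
    · intro v hv
      simp only [Set.mem_setOf_eq] at hv ⊢
      by_cases h1 : v = x
      · subst h1; simp [hgx]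
      · by_cases h2 : v = u
        · subst h2; simp [hgu]
        · by_cases h3 : v = y
          · subst h3; simp [hgy]
          · by_cases h4 : v = u'
            · subst h4; simp [hgu']
            · rw [hgother v h1 h2 h3 h4]; exact hv
    · intro hsub
      have := hsub (show u ∈ {v | (g v).isSome} by simp [hgu])
      simp only [Set.mem_setOf_eq, hu] at this
      simp at this
  -- Loaded endpoints
  set L : V → Prop := fun x => ∃ u, f u = none ∧ G.Adj x u with hLdef
  have hP3 : ∀ ⦃x y : V⦄, f x = some y → L x → L y → False := by
    rintro x y hxy ⟨u, hu, hxu⟩ ⟨u', hu', hyu'⟩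
    by_cases h : u = u'
    · subst h
      exact ld_no_c3 hg hxu hyu'.symm (hpair hxy).2.symm
    · exact hP2 hxy hu hu' h hxu hyu'
  set e : V ≃ Fin (Fintype.card V) := Fintype.equivFin V with hedef
  set C : Set V :=
    {x | ∃ y, f x = some y ∧ (L x ∨ (¬ L x ∧ ¬ L y ∧ e x < e y))} with hCdef
  -- exactly one of each matched pair is in C
  have hE1 : ∀ x ∈ C, ∃ y, f x = some y ∧ y ∉ C := by
    rintro x ⟨y, hxy, hcase⟩
    refine ⟨y, hxy, ?_⟩
    rintro ⟨z, hyz, hcase'⟩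
    have hzx : z = x := by
      have := (hpair hxy).1
      rw [this] at hyz; simpa using hyz.symm
    subst hzx
    rcases hcase with hLx | ⟨hnLx, hnLy, hlt⟩
    · rcases hcase' with hLy | ⟨hnLy, hnLx, _⟩
      · exact hP3 hxy hLx hLy
      · exact hnLx hLx
    · rcases hcase' with hLy | ⟨hnLy', hnLx', hlt'⟩
      · exact hnLy hLy
      · exact absurd (hlt.trans hlt') (lt_irrefl _)
  have hE2 : ∀ x y, f x = some y → x ∉ C → y ∈ C := by
    intro x y hxy hxC
    obtain ⟨hyx, hadj⟩ := hpair hxy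
    by_cases hLy : L y
    · exact ⟨x, hyx, Or.inl hLy⟩
    · by_cases hLx : L x
      · exact absurd ⟨y, hxy, Or.inl hLx⟩ hxC
      · rcases lt_trichotomy (e x) (e y) with h | h | h
        · exact absurd ⟨y, hxy, Or.inr ⟨hLx, hLy, h⟩⟩ hxC
        · exact absurd (e.injective h) hadj.ne
        · exact ⟨x, hyx, Or.inr ⟨hLy, hLx, h⟩⟩
  -- unmatched vertices have all neighbors in C
  have hL1 : ∀ ⦃u w : V⦄, f u = none → G.Adj u w → w ∈ C := by
    intro u w hu hadj
    obtain ⟨z, hz⟩ := Option.isSome_iff_exists.mp (hP1 hu hadj)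
    exact ⟨z, hz, Or.inl ⟨u, hu, hadj.symm⟩⟩
  have hUC : ∀ ⦃u : V⦄, f u = none → u ∉ C := by
    rintro u hu ⟨y, huy, -⟩
    rw [hu] at huy; simp at huy
  -- cardinality bound
  have hcard : 2 * C.ncard ≤ Fintype.card V := by
    have hinj : Set.InjOn (fun x => (f x).getD x) C := by
      intro a ha b hb hab
      obtain ⟨ya, hya, -⟩ := hE1 a ha
      obtain ⟨yb, hyb, -⟩ := hE1 b hb
      simp only [hya, hyb, Option.getD_some] at hab
      subst hab
      have h1 := (hpair hya).1
      have h2 := (hpair hyb).1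
      rw [h1] at h2; simpa using h2
    have hmapsto : ∀ x ∈ C, (fun x => (f x).getD x) x ∈ Cᶜ := by
      intro x hx
      obtain ⟨y, hxy, hyC⟩ := hE1 x hx
      simpa [hxy] using hyC
    have hle : C.ncard ≤ Cᶜ.ncard :=
      Set.ncard_le_ncard_of_injOn _ hmapsto hinj (Set.toFinite _)
    have h := Set.ncard_add_ncard_compl C (Set.toFinite _) (Set.toFinite _)
    rw [Nat.card_eq_fintype_card] at h
    omega
  -- locating-dominating
  have hLD : G.LocatingDominatingSet C := by
    constructor
    · intro v
      by_cases hv : v ∈ C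
      · exact ⟨v, hv, Or.inl rfl⟩
      · rcases hfv : f v with _ | y
        · have h2 : (G.neighborSet v).Nonempty := by
            apply Set.nonempty_of_ncard_ne_zero
            have := hdeg v; omega
          obtain ⟨w, hw⟩ := h2
          exact ⟨w, hL1 hfv hw, Or.inr hw.symm⟩
        · exact ⟨y, hE2 v y hfv hv, Or.inr (hpair hfv).2.symm⟩
    · intro u hu v hv huv heq
      -- first handle the case where u or v is unmatched
      have key : ∀ a b : V, a ∉ C → b ∉ C → a ≠ b → f a = none →
          G.neighborSet a ∩ C = G.neighborSet b ∩ C → False := by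
        intro a b haC hbC hab hfa heqab
        have h2 : 1 < (G.neighborSet a).ncard := hdeg a
        rw [Set.one_lt_ncard (Set.toFinite _)] at h2
        obtain ⟨x, hx, y, hy, hxy⟩ := h2
        have hxC : x ∈ G.neighborSet a ∩ C := ⟨hx, hL1 hfa hx⟩
        have hyC : y ∈ G.neighborSet a ∩ C := ⟨hy, hL1 hfa hy⟩
        rw [heqab] at hxC hyC
        exact ld_no_c4 hg hab hxy hx hxC.1.symm hyC.1 hy.symm
      rcases hfu : f u with _ | pu
      · exact key u v hu hv huv hfu heq
      · rcases hfv : f v with _ | pv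
        · exact key v u hv hu huv.symm hfv heq.symm
        · have hpuC : pu ∈ C := hE2 u pu hfu hu
          have hpvC : pv ∈ C := hE2 v pv hfv hv
          have hpu : pu ∈ G.neighborSet u ∩ C := ⟨(hpair hfu).2, hpuC⟩
          have hpv' : pv ∈ G.neighborSet v ∩ C := ⟨(hpair hfv).2, hpvC⟩
          rw [heq] at hpu
          rw [← heq] at hpv'
          have hne : pu ≠ pv := by
            rintro rfl
            have h1 := (hpair hfu).1
            have h2 := (hpair hfv).1
            rw [h1] at h2
            exact huv (by simpa using h2)
          exact ld_no_c4 hg huv hne (hpair hfu).2 hpu.1.symm (hpair hfv).2 hpv'.1.symm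
  exact ⟨C, hLD, hcard⟩

/-- Theorem: every graph of order `n`, girth at least 5 and minimum degree at
least 2 has location-domination number at most `n/2`. -/
theorem gammaLD_le_half_order
    {V : Type*} [Fintype V] (G : SimpleGraph V) (hg : 5 ≤ G.egirth)
    (hdeg : ∀ v : V, 2 ≤ (G.neighborSet v).ncard) :
    (G.gammaLD : ℝ) ≤ (Fintype.card V : ℝ) / 2 := by
  obtain ⟨C, hLD, hcard⟩ := ld_exists_small G hg hdeg
  have h1 : G.gammaLD ≤ C.ncard := Nat.sInf_le ⟨C, hLD, rfl⟩
  have h1' := (Nat.cast_le (α := ℝ)).mpr h1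
  have h2 := (Nat.cast_le (α := ℝ)).mpr hcard
  push_cast at h1' h2 ⊢
  linarith
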